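/- For every real u > 1: ∫₀¹ (-log(u·v))/(u² - v²) dv = (1/(2u))·( Σ_{n=1}^∞ (1/u)ⁿ/n² - Σ_{n=1}^∞ (-1/u)ⁿ/n² - log u · log((u+1)/(u-1)) ). -/

import Mathlib

open MeasureTheory Set

private noncomputable def auxF (k : ℕ) (v : ℝ) : ℝ :=
  (v ^ (k+1) - ((k:ℝ)+1) * (v ^ (k+1) * Real.log v)) / ((k:ℝ)+1)^2

private lemma auxF_cont (k : ℕ) : Continuous (auxF k) := by
  unfold auxF
  have h : Continuous fun v : ℝ => v ^ (k+1) * Real.log v := by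
    have : (fun v : ℝ => v ^ (k+1) * Real.log v) = fun v => v ^ k * (v * Real.log v) := by
      funext v; ring
    rw [this]
    exact (continuous_pow k).mul Real.continuous_mul_log
  exact ((continuous_pow (k+1)).sub (continuous_const.mul h)).div_const _

private lemma auxF_deriv (k : ℕ) {v : ℝ} (hv : 0 < v) :
    HasDerivAt (auxF k) (v ^ k * (-Real.log v)) v := by
  have h1 : HasDerivAt (fun v : ℝ => v ^ (k+1)) (((k:ℝ)+1) * v ^ k) v := by
    simpa using hasDerivAt_pow (k+1) v
  have hlog : HasDerivAt Real.log v⁻¹ v := Real.hasDerivAt_log hv.ne'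
  have h2 : HasDerivAt (fun v : ℝ => v ^ (k+1) * Real.log v)
      (((k:ℝ)+1) * v ^ k * Real.log v + v ^ (k+1) * v⁻¹) v := h1.mul hlog
  have h3 := (h1.sub (h2.const_mul (((k:ℝ)+1)))).div_const (((k:ℝ)+1)^2)
  have h4 : HasDerivAt (auxF k) _ v := h3
  convert h4 using 1
  have hk : ((k:ℝ)+1) ≠ 0 := by positivity
  have hv' : v ≠ 0 := hv.ne'
  field_simp
  ring

private lemma aux_integrable (k : ℕ) :
    IntegrableOn (fun v : ℝ => v ^ k * (-Real.log v)) (Ioo 0 1) := by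
  have h := intervalIntegral.integrableOn_deriv_of_nonneg (g := auxF k)
    (g' := fun v => v ^ k * (-Real.log v)) (a := 0) (b := 1)
    (auxF_cont k).continuousOn (fun x hx => auxF_deriv k hx.1) ?_
  · exact h.mono_set Ioo_subset_Ioc_self
  · intro x hx
    have h1 : Real.log x ≤ 0 := Real.log_nonpos hx.1.le hx.2.le
    have h2 : (0:ℝ) ≤ x ^ k := pow_nonneg hx.1.le k
    nlinarith [mul_nonneg h2 (neg_nonneg.mpr h1)]

private lemma aux_integral (k : ℕ) :
    ∫ v in Ioo (0:ℝ) 1, v ^ k * (-Real.log v) = 1 / ((k:ℝ)+1)^2 := by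
  have hint : IntervalIntegrable (fun v : ℝ => v ^ k * (-Real.log v)) volume 0 1 := by
    rw [intervalIntegrable_iff_integrableOn_Ioo_of_le (by norm_num)]
    exact aux_integrable k
  have h := intervalIntegral.integral_eq_sub_of_hasDerivAt_of_le (by norm_num : (0:ℝ) ≤ 1)
    (auxF_cont k).continuousOn (fun x hx => auxF_deriv k hx.1) hint
  have h2 : ∫ v in Ioo (0:ℝ) 1, v ^ k * (-Real.log v)
      = ∫ v in (0:ℝ)..1, v ^ k * (-Real.log v) := by
    rw [intervalIntegral.integral_of_le (by norm_num : (0:ℝ) ≤ 1),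
      MeasureTheory.integral_Ioc_eq_integral_Ioo]
  rw [h2, h]
  simp [auxF]

private lemma aux_summable_bound (u : ℝ) (hu : 1 < u) (x : ℝ) (hx : |x| = 1/u) :
    Summable (fun n : ℕ => x ^ (n+1) / ((n:ℝ)+1)^2) := by
  have hu0 : 0 < u := lt_trans one_pos hu
  have h0 : (0:ℝ) ≤ 1/u := by positivity
  have h1 : 1/u < 1 := by rw [div_lt_one hu0]; exact hu
  apply Summable.of_norm_bounded (summable_geometric_of_lt_one h0 h1)
  intro n
  have hn1 : (1:ℝ) ≤ ((n:ℝ)+1)^2 := by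
    have : (0:ℝ) ≤ (n:ℝ) := Nat.cast_nonneg n
    nlinarith
  calc ‖x ^ (n+1) / ((n:ℝ)+1)^2‖ = |x|^(n+1) / ((n:ℝ)+1)^2 := by
        rw [Real.norm_eq_abs, abs_div, abs_pow, abs_of_nonneg (by positivity : (0:ℝ) ≤ ((n:ℝ)+1)^2)]
    _ ≤ |x|^(n+1) := by
        exact div_le_self (pow_nonneg (abs_nonneg x) _) hn1
    _ = (1/u)^(n+1) := by rw [hx]
    _ ≤ (1/u)^n := pow_le_pow_of_le_one h0 h1.le (Nat.le_succ n)

private lemma J1calc (u : ℝ) (hu : 1 < u) :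
    ∫ v in Ioo (0:ℝ) 1, (u^2 - v^2)⁻¹ = 1/(2*u) * Real.log ((u+1)/(u-1)) := by
  have hu0 : 0 < u := lt_trans one_pos hu
  have key : EqOn (fun v : ℝ => (u^2 - v^2)⁻¹)
      (fun v : ℝ => 1/(2*u) * ((u - v)⁻¹ + (u + v)⁻¹)) (uIcc (0:ℝ) 1) := by
    intro v hv
    rw [uIcc_of_le (by norm_num)] at hv
    have h1 : u - v ≠ 0 := by have := hv.2; intro h; nlinarith [hv.1]
    have h2 : u + v ≠ 0 := by have := hv.1; intro h; nlinarith [hv.2]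
    have h3 : u^2 - v^2 ≠ 0 := by
      have he : u^2 - v^2 = (u-v)*(u+v) := by ring
      rw [he]; exact mul_ne_zero h1 h2
    simp only
    field_simp
    ring
  have c1 : ContinuousOn (fun v : ℝ => (u - v)⁻¹) (uIcc (0:ℝ) 1) := by
    apply ContinuousOn.inv₀ (continuous_const.sub continuous_id).continuousOn
    intro x hx
    rw [uIcc_of_le (by norm_num)] at hx
    intro h; simp only [Pi.sub_apply, id_eq] at h; nlinarith [hx.1, hx.2]
  have c2 : ContinuousOn (fun v : ℝ => (u + v)⁻¹) (uIcc (0:ℝ) 1) := by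
    apply ContinuousOn.inv₀ (continuous_const.add continuous_id).continuousOn
    intro x hx
    rw [uIcc_of_le (by norm_num)] at hx
    intro h; simp only [Pi.add_apply, id_eq] at h; nlinarith [hx.1, hx.2]
  rw [← MeasureTheory.integral_Ioc_eq_integral_Ioo,
    ← intervalIntegral.integral_of_le (by norm_num : (0:ℝ) ≤ 1),
    intervalIntegral.integral_congr key]
  have i1 : IntervalIntegrable (fun v : ℝ => (u - v)⁻¹) volume 0 1 := c1.intervalIntegrable
  have i2 : IntervalIntegrable (fun v : ℝ => (u + v)⁻¹) volume 0 1 := c2.intervalIntegrable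
  rw [intervalIntegral.integral_const_mul, intervalIntegral.integral_add i1 i2]
  have e1 : (∫ v in (0:ℝ)..1, (u - v)⁻¹) = Real.log (u / (u-1)) := by
    have := intervalIntegral.integral_comp_sub_left (a := (0:ℝ)) (b := 1)
      (fun x : ℝ => x⁻¹) u
    simp only [sub_zero] at this
    rw [this, integral_inv_of_pos (by linarith) hu0]
  have e2 : (∫ v in (0:ℝ)..1, (u + v)⁻¹) = Real.log ((u+1) / u) := by
    have := intervalIntegral.integral_comp_add_left (a := (0:ℝ)) (b := 1)
      (fun x : ℝ => x⁻¹) u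
    simp only [add_zero] at this
    rw [this, integral_inv_of_pos hu0 (by linarith)]
  rw [e1, e2]
  have h1 : u - 1 ≠ 0 := by linarith
  have h2 : u + 1 ≠ 0 := by linarith
  rw [Real.log_div hu0.ne' h1, Real.log_div h2 hu0.ne', Real.log_div h2 h1]
  ring

private lemma J2calc (u : ℝ) (hu : 1 < u) :
    ∫ v in Ioo (0:ℝ) 1, (-Real.log v) * (u^2 - v^2)⁻¹
      = ∑' n : ℕ, (1/u^2)^(n+1) * (1/(2*(n:ℝ)+1)^2) := by
  have hu0 : 0 < u := lt_trans one_pos hu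
  have hu2 : (1:ℝ) < u^2 := by nlinarith
  set F : ℕ → ℝ → ℝ := fun n v => (1/u^2)^(n+1) * (v^(2*n) * (-Real.log v)) with hF
  have hF_int : ∀ n, Integrable (F n) (volume.restrict (Ioo (0:ℝ) 1)) := fun n =>
    (aux_integrable (2*n)).const_mul _
  have hval : ∀ n, ∫ v in Ioo (0:ℝ) 1, F n v = (1/u^2)^(n+1) * (1/(2*(n:ℝ)+1)^2) := by
    intro n
    rw [hF]
    simp only
    rw [MeasureTheory.integral_const_mul, aux_integral (2*n)]
    congr 1
    push_cast
    ring_nf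
  have hnorm : ∀ n, (∫ v in Ioo (0:ℝ) 1, ‖F n v‖) = (1/u^2)^(n+1) * (1/(2*(n:ℝ)+1)^2) := by
    intro n
    rw [← hval n]
    apply setIntegral_congr_fun measurableSet_Ioo
    intro v hv
    have hlog : 0 ≤ -Real.log v := by
      have := Real.log_nonpos hv.1.le hv.2.le; linarith
    have : 0 ≤ F n v := by
      apply mul_nonneg (by positivity)
      exact mul_nonneg (pow_nonneg hv.1.le _) hlog
    exact Real.norm_of_nonneg this
  have hF_sum : Summable fun n => ∫ v in Ioo (0:ℝ) 1, ‖F n v‖ := by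
    rw [summable_congr hnorm]
    have h0 : (0:ℝ) ≤ 1/u^2 := by positivity
    have h1 : 1/u^2 < 1 := by rw [div_lt_one (by positivity)]; exact hu2
    apply Summable.of_nonneg_of_le (fun n => by positivity)
      (fun n => ?_) (summable_geometric_of_lt_one h0 h1)
    have hb : (1/u^2)^(n+1) * (1/(2*(n:ℝ)+1)^2) ≤ (1/u^2)^(n+1) * 1 := by
      apply mul_le_mul_of_nonneg_left _ (by positivity)
      rw [div_le_one (by positivity)]
      nlinarith [Nat.cast_nonneg (α := ℝ) n]
    calc (1/u^2)^(n+1) * (1/(2*(n:ℝ)+1)^2) ≤ (1/u^2)^(n+1) * 1 := hb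
      _ = (1/u^2)^(n+1) := mul_one _
      _ ≤ (1/u^2)^n := pow_le_pow_of_le_one h0 h1.le (Nat.le_succ n)
  have hkey := MeasureTheory.integral_tsum_of_summable_integral_norm hF_int hF_sum
  have hpt : EqOn (fun v : ℝ => ∑' n, F n v)
      (fun v : ℝ => (-Real.log v) * (u^2 - v^2)⁻¹) (Ioo (0:ℝ) 1) := by
    intro v hv
    have hv2 : v^2 < u^2 := by nlinarith [hv.1, hv.2]
    have hne : u^2 - v^2 ≠ 0 := by nlinarith
    have hterm : ∀ n : ℕ, F n v = ((-Real.log v) * (1/u^2)) * (v^2/u^2)^n := by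
      intro n
      rw [hF]
      simp only
      rw [div_pow, div_pow, ← pow_mul, ← pow_mul]
      field_simp
      ring
    simp only
    rw [tsum_congr hterm, tsum_mul_left,
      tsum_geometric_of_lt_one (by positivity) (by rw [div_lt_one (by positivity)]; exact hv2)]
    field_simp
  rw [← MeasureTheory.setIntegral_congr_fun measurableSet_Ioo hpt, ← hkey]
  exact tsum_congr hval

private lemma series_id (u : ℝ) (hu : 1 < u) :
    (∑' n : ℕ, (1/u)^(n+1)/((n:ℝ)+1)^2) - (∑' n : ℕ, (-1/u)^(n+1)/((n:ℝ)+1)^2)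
      = 2*u * ∑' n : ℕ, (1/u^2)^(n+1) * (1/(2*(n:ℝ)+1)^2) := by
  have hu0 : 0 < u := lt_trans one_pos hu
  have hS1 : Summable (fun n : ℕ => (1/u)^(n+1)/((n:ℝ)+1)^2) :=
    aux_summable_bound u hu (1/u) (abs_of_pos (by positivity))
  have hS2 : Summable (fun n : ℕ => (-1/u)^(n+1)/((n:ℝ)+1)^2) :=
    aux_summable_bound u hu (-1/u) (by rw [neg_div, abs_neg, abs_of_pos (by positivity)])
  set f : ℕ → ℝ := fun n => (1/u)^(n+1)/((n:ℝ)+1)^2 - (-1/u)^(n+1)/((n:ℝ)+1)^2 with hfdef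
  have hf : Summable f := hS1.sub hS2
  have he : Summable (fun k => f (2*k)) := hf.comp_injective (fun a b h => by omega)
  have ho : Summable (fun k => f (2*k+1)) := hf.comp_injective (fun a b h => by omega)
  rw [← hS1.tsum_sub hS2, ← hfdef, ← tsum_even_add_odd he ho]
  have hodd : ∀ k : ℕ, f (2*k+1) = 0 := by
    intro k
    have hne : (-(1:ℝ)/u)^(2*k+1+1) = (1/u)^(2*k+1+1) := by
      rw [neg_div, Even.neg_pow ⟨k+1, by ring⟩]
    simp only [hfdef, hne, sub_self]
  have heven : ∀ k : ℕ, f (2*k) = 2*u*((1/u^2)^(k+1) * (1/(2*(k:ℝ)+1)^2)) := by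
    intro k
    have hponeg : (-(1:ℝ)/u)^(2*k+1) = -((1/u)^(2*k+1)) := by
      rw [neg_div, Odd.neg_pow ⟨k, by ring⟩]
    have hpp : ((1:ℝ)/u^2)^(k+1) = (1/u)^(2*k+1) * (1/u) := by
      rw [div_pow, div_pow, one_pow, one_pow, ← pow_mul, div_mul_div_comm, one_mul, ← pow_succ]
      congr 2
    simp only [hfdef, hponeg, hpp]
    have hcast : ((2*k : ℕ) : ℝ) = 2*(k:ℝ) := by push_cast; ring
    rw [hcast]
    have hden : (2*(k:ℝ)+1) ≠ 0 := by positivity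
    field_simp
    ring
  rw [tsum_congr hodd, tsum_zero, add_zero, tsum_congr heven, tsum_mul_left]


/-- Exact formula for the `u`-channel amplitude:
`∫₀¹ (-log(uv))/(u²-v²) dv = (1/(2u))(Li₂(1/u) - Li₂(-1/u) - log u · log((u+1)/(u-1)))`,
with the dilogarithms given by their convergent power series. -/
theorem stmt15 (u : ℝ) (hu : 1 < u) :
    (∫ v in Ioo (0 : ℝ) 1, (-Real.log (u * v)) / (u ^ 2 - v ^ 2)) =
      (1 / (2 * u)) *
        ((∑' n : ℕ, (1 / u) ^ (n + 1) / ((n : ℝ) + 1) ^ 2) -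
         (∑' n : ℕ, (-1 / u) ^ (n + 1) / ((n : ℝ) + 1) ^ 2) -
         Real.log u * Real.log ((u + 1) / (u - 1))) := by
  have hu0 : 0 < u := lt_trans one_pos hu
  have hI1 : IntegrableOn (fun v : ℝ => (u^2 - v^2)⁻¹) (Ioo 0 1) := by
    have hc : ContinuousOn (fun v : ℝ => (u^2 - v^2)⁻¹) (Icc 0 1) := by
      apply ContinuousOn.inv₀
        ((continuous_const.sub (continuous_pow 2)).continuousOn)
      intro x hx
      intro h
      simp only [Pi.sub_apply] at h
      nlinarith [hx.1, hx.2]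
    exact (hc.integrableOn_Icc).mono_set Ioo_subset_Icc_self
  have hlog0 : IntegrableOn (fun v : ℝ => -Real.log v) (Ioo 0 1) := by
    have := aux_integrable 0
    simpa using this
  have hI2 : IntegrableOn (fun v : ℝ => (-Real.log v) * (u^2 - v^2)⁻¹) (Ioo 0 1) := by
    have hg : IntegrableOn (fun v : ℝ => (-Real.log v) * (u^2-1)⁻¹) (Ioo 0 1) :=
      hlog0.mul_const _
    apply Integrable.mono' hg
    · apply ContinuousOn.aestronglyMeasurable _ measurableSet_Ioo
      apply ContinuousOn.mul
      · exact (Real.continuousOn_log.mono (fun x hx => ne_of_gt hx.1)).neg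
      · apply ContinuousOn.inv₀
          ((continuous_const.sub (continuous_pow 2)).continuousOn)
        intro x hx
        intro h
        simp only [Pi.sub_apply] at h
        nlinarith [hx.1, hx.2]
    · rw [ae_restrict_iff' measurableSet_Ioo]
      apply MeasureTheory.ae_of_all
      intro v hv
      have hlog : 0 ≤ -Real.log v := by
        have := Real.log_nonpos hv.1.le hv.2.le; linarith
      have hpos : (0:ℝ) < u^2 - v^2 := by nlinarith [hv.1, hv.2]
      have h1 : (u^2 - v^2)⁻¹ ≤ (u^2-1)⁻¹ := by
        apply inv_anti₀ (by nlinarith) (by nlinarith [hv.1, hv.2])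
      rw [Real.norm_eq_abs, abs_of_nonneg (mul_nonneg hlog (le_of_lt (inv_pos.mpr hpos)))]
      exact mul_le_mul_of_nonneg_left h1 hlog
  have hsplit : (∫ v in Ioo (0:ℝ) 1, (-Real.log (u*v))/(u^2 - v^2))
      = (-Real.log u) * (∫ v in Ioo (0:ℝ) 1, (u^2 - v^2)⁻¹)
        + ∫ v in Ioo (0:ℝ) 1, (-Real.log v) * (u^2 - v^2)⁻¹ := by
    rw [← MeasureTheory.integral_const_mul,
      ← MeasureTheory.integral_add (hI1.const_mul _) hI2]
    apply setIntegral_congr_fun measurableSet_Ioo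
    intro v hv
    have h0 : u^2 - v^2 ≠ 0 := by nlinarith [hv.1, hv.2]
    simp only
    rw [Real.log_mul hu0.ne' hv.1.ne']
    field_simp
    ring
  rw [hsplit, J1calc u hu, J2calc u hu]
  have hs := series_id u hu
  rw [hs]
  field_simp
  ring
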